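/- The grid graph P3 □ Pk (Cartesian product of a 3-vertex path and a k-vertex path), for every k ≥ 3, is weakly 2-linked: for every four (not necessarily distinct) vertices u1, v1, u2, v2, there exist a u1–v1 path and a u2–v2 path that are edge-disjoint. -/

import Mathlib

open SimpleGraph

/-- The grid graph `Pm □ Pk` (0-indexed coordinates): `(i,j)` and `(p,q)` are
adjacent iff `|i-p| + |j-q| = 1`. -/
def grid (m k : ℕ) : SimpleGraph (Fin m × Fin k) where
  Adj u v := ((u.1 : ℤ) - v.1).natAbs + ((u.2 : ℤ) - v.2).natAbs = 1
  symm := by constructor; intro u v h; omega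
  loopless := by constructor; intro u h; simp at h

/-- A graph is weakly 2-linked if any two terminal pairs can be joined by
edge-disjoint paths. -/
def Weakly2Linked {V : Type*} (G : SimpleGraph V) : Prop :=
  ∀ u1 v1 u2 v2 : V, ∃ (p : G.Walk u1 v1) (q : G.Walk u2 v2),
    p.IsPath ∧ q.IsPath ∧ p.edges.Disjoint q.edges

namespace Grid3k

variable {k : ℕ}

/-- `e` is a horizontal edge in row `i` with both column endpoints in `[lo, hi]`. -/
def isH (i : Fin 3) (lo hi : ℕ) (e : Sym2 (Fin 3 × Fin k)) : Prop :=
  ∃ x y : Fin 3 × Fin k, e = s(x, y) ∧ x.1 = i ∧ y.1 = i ∧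
    lo ≤ x.2.val ∧ x.2.val + 1 = y.2.val ∧ y.2.val ≤ hi

/-- `e` is a vertical edge in column `j` with both row endpoints in `[lo, hi]`. -/
def isV (j : Fin k) (lo hi : ℕ) (e : Sym2 (Fin 3 × Fin k)) : Prop :=
  ∃ x y : Fin 3 × Fin k, e = s(x, y) ∧ x.2 = j ∧ y.2 = j ∧
    lo ≤ x.1.val ∧ x.1.val + 1 = y.1.val ∧ y.1.val ≤ hi

lemma isH_isV_false {i : Fin 3} {j : Fin k} {lo hi lo' hi' : ℕ} {e : Sym2 (Fin 3 × Fin k)}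
    (h1 : isH i lo hi e) (h2 : isV j lo' hi' e) : False := by
  obtain ⟨x, y, rfl, hx1, hy1, _, hxy, _⟩ := h1
  obtain ⟨x', y', he, hx2, hy2, _, hxy', _⟩ := h2
  rw [Sym2.eq_iff] at he
  apply_fun Fin.val at hx1 hy1
  obtain ⟨rfl, rfl⟩ | ⟨rfl, rfl⟩ := he <;> omega

lemma isH_isH_false {i i' : Fin 3} {lo hi lo' hi' : ℕ} {e : Sym2 (Fin 3 × Fin k)}
    (h1 : isH i lo hi e) (h2 : isH i' lo' hi' e)
    (hc : i.val ≠ i'.val ∨ min hi hi' ≤ max lo lo') : False := by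
  obtain ⟨x, y, rfl, hx1, hy1, ha, hb, hcc⟩ := h1
  obtain ⟨x', y', he, hx1', hy1', ha', hb', hcc'⟩ := h2
  rw [Sym2.eq_iff] at he
  apply_fun Fin.val at hx1 hy1 hx1' hy1'
  obtain ⟨rfl, rfl⟩ | ⟨rfl, rfl⟩ := he <;> omega

lemma isV_isV_false {j j' : Fin k} {lo hi lo' hi' : ℕ} {e : Sym2 (Fin 3 × Fin k)}
    (h1 : isV j lo hi e) (h2 : isV j' lo' hi' e)
    (hc : j.val ≠ j'.val ∨ min hi hi' ≤ max lo lo') : False := by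
  obtain ⟨x, y, rfl, hx1, hy1, ha, hb, hcc⟩ := h1
  obtain ⟨x', y', he, hx1', hy1', ha', hb', hcc'⟩ := h2
  rw [Sym2.eq_iff] at he
  apply_fun Fin.val at hx1 hy1 hx1' hy1'
  obtain ⟨rfl, rfl⟩ | ⟨rfl, rfl⟩ := he <;> omega

lemma adjH (i : Fin 3) (b b' : Fin k) (h : b.val + 1 = b'.val) :
    (grid 3 k).Adj (i, b) (i, b') := by
  show ((i : ℤ) - (i : ℤ)).natAbs + ((b : ℤ) - (b' : ℤ)).natAbs = 1
  omega

lemma adjV (j : Fin k) (a a' : Fin 3) (h : a.val + 1 = a'.val) :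
    (grid 3 k).Adj (a, j) (a', j) := by
  show ((a : ℤ) - (a' : ℤ)).natAbs + ((j : ℤ) - (j : ℤ)).natAbs = 1
  omega

lemma hwalk_mono (i : Fin 3) : ∀ (n : ℕ) (b d : Fin k), b.val + n = d.val →
    ∃ w : (grid 3 k).Walk (i, b) (i, d),
      w.support.Nodup ∧
      (∀ x ∈ w.support, x.1 = i ∧ b.val ≤ x.2.val ∧ x.2.val ≤ d.val) ∧
      (∀ e ∈ w.edges, isH i b.val d.val e) := by
  intro n
  induction n with
  | zero =>
    intro b d h
    have : b = d := Fin.ext (by omega)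
    subst this
    refine ⟨.nil, by simp, ?_, by simp⟩
    intro x hx
    simp at hx
    subst hx
    simp
  | succ n ih =>
    intro b d h
    have hlt : b.val + 1 < k := by have := d.isLt; omega
    set b' : Fin k := ⟨b.val + 1, hlt⟩ with hb'
    have hb'v : b'.val = b.val + 1 := rfl
    obtain ⟨w, hnd, hsup, hedg⟩ := ih b' d (by omega)
    refine ⟨.cons (adjH i b b' rfl) w, ?_, ?_, ?_⟩
    · rw [Walk.support_cons, List.nodup_cons]
      refine ⟨fun hmem => ?_, hnd⟩
      have := (hsup _ hmem).2.1
      dsimp only at this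
      omega
    · intro x hx
      rw [Walk.support_cons] at hx
      rcases List.mem_cons.mp hx with rfl | hx
      · exact ⟨rfl, le_refl _, by dsimp only; omega⟩
      · obtain ⟨h1, h2, h3⟩ := hsup x hx
        exact ⟨h1, by omega, h3⟩
    · intro e he
      rw [Walk.edges_cons] at he
      rcases List.mem_cons.mp he with rfl | he
      · exact ⟨(i, b), (i, b'), rfl, rfl, rfl, le_refl _, hb'v.symm, by dsimp only; omega⟩
      · obtain ⟨x, y, rfl, h1, h2, h3, h4, h5⟩ := hedg e he
        exact ⟨x, y, rfl, h1, h2, by omega, h4, h5⟩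

lemma hwalk (i : Fin 3) (b d : Fin k) :
    ∃ w : (grid 3 k).Walk (i, b) (i, d),
      w.support.Nodup ∧
      (∀ x ∈ w.support, x.1 = i ∧ min b.val d.val ≤ x.2.val ∧ x.2.val ≤ max b.val d.val) ∧
      (∀ e ∈ w.edges, isH i (min b.val d.val) (max b.val d.val) e) := by
  rcases le_total b.val d.val with h | h
  · obtain ⟨w, h1, h2, h3⟩ := hwalk_mono i (d.val - b.val) b d (by omega)
    have e1 : min b.val d.val = b.val := by omega
    have e2 : max b.val d.val = d.val := by omega
    rw [e1, e2]
    exact ⟨w, h1, h2, h3⟩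
  · obtain ⟨w, h1, h2, h3⟩ := hwalk_mono i (b.val - d.val) d b (by omega)
    have e1 : min b.val d.val = d.val := by omega
    have e2 : max b.val d.val = b.val := by omega
    rw [e1, e2]
    refine ⟨w.reverse, by rw [Walk.support_reverse]; exact List.nodup_reverse.mpr h1, ?_, ?_⟩
    · intro x hx
      rw [Walk.support_reverse, List.mem_reverse] at hx
      exact h2 x hx
    · intro e he
      rw [Walk.edges_reverse, List.mem_reverse] at he
      exact h3 e he

lemma vwalk_mono (j : Fin k) : ∀ (n : ℕ) (b d : Fin 3), b.val + n = d.val →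
    ∃ w : (grid 3 k).Walk (b, j) (d, j),
      w.support.Nodup ∧
      (∀ x ∈ w.support, x.2 = j ∧ b.val ≤ x.1.val ∧ x.1.val ≤ d.val) ∧
      (∀ e ∈ w.edges, isV j b.val d.val e) := by
  intro n
  induction n with
  | zero =>
    intro b d h
    have : b = d := Fin.ext (by omega)
    subst this
    refine ⟨.nil, by simp, ?_, by simp⟩
    intro x hx
    simp at hx
    subst hx
    simp
  | succ n ih =>
    intro b d h
    have hlt : b.val + 1 < 3 := by have := d.isLt; omega
    set b' : Fin 3 := ⟨b.val + 1, hlt⟩ with hb'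
    have hb'v : b'.val = b.val + 1 := rfl
    obtain ⟨w, hnd, hsup, hedg⟩ := ih b' d (by omega)
    refine ⟨.cons (adjV j b b' rfl) w, ?_, ?_, ?_⟩
    · rw [Walk.support_cons, List.nodup_cons]
      refine ⟨fun hmem => ?_, hnd⟩
      have := (hsup _ hmem).2.1
      dsimp only at this
      omega
    · intro x hx
      rw [Walk.support_cons] at hx
      rcases List.mem_cons.mp hx with rfl | hx
      · exact ⟨rfl, le_refl _, by dsimp only; omega⟩
      · obtain ⟨h1, h2, h3⟩ := hsup x hx
        exact ⟨h1, by omega, h3⟩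
    · intro e he
      rw [Walk.edges_cons] at he
      rcases List.mem_cons.mp he with rfl | he
      · exact ⟨(b, j), (b', j), rfl, rfl, rfl, le_refl _, hb'v.symm, by dsimp only; omega⟩
      · obtain ⟨x, y, rfl, h1, h2, h3, h4, h5⟩ := hedg e he
        exact ⟨x, y, rfl, h1, h2, by omega, h4, h5⟩

lemma vwalk (j : Fin k) (b d : Fin 3) :
    ∃ w : (grid 3 k).Walk (b, j) (d, j),
      w.support.Nodup ∧
      (∀ x ∈ w.support, x.2 = j ∧ min b.val d.val ≤ x.1.val ∧ x.1.val ≤ max b.val d.val) ∧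
      (∀ e ∈ w.edges, isV j (min b.val d.val) (max b.val d.val) e) := by
  rcases le_total b.val d.val with h | h
  · obtain ⟨w, h1, h2, h3⟩ := vwalk_mono j (d.val - b.val) b d (by omega)
    have e1 : min b.val d.val = b.val := by omega
    have e2 : max b.val d.val = d.val := by omega
    rw [e1, e2]
    exact ⟨w, h1, h2, h3⟩
  · obtain ⟨w, h1, h2, h3⟩ := vwalk_mono j (b.val - d.val) d b (by omega)
    have e1 : min b.val d.val = d.val := by omega
    have e2 : max b.val d.val = b.val := by omega
    rw [e1, e2]
    refine ⟨w.reverse, by rw [Walk.support_reverse]; exact List.nodup_reverse.mpr h1, ?_, ?_⟩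
    · intro x hx
      rw [Walk.support_reverse, List.mem_reverse] at hx
      exact h2 x hx
    · intro e he
      rw [Walk.edges_reverse, List.mem_reverse] at he
      exact h3 e he

/-- A "vertical-horizontal-vertical" path from `(a,b)` to `(c,d)` through row `r`. -/
lemma vhv (a c : Fin 3) (b d : Fin k) (r : Fin 3) (hp : b ≠ d ∨ r = c) :
    ∃ w : (grid 3 k).Walk (a, b) (c, d), w.IsPath ∧
      ∀ e ∈ w.edges,
        isV b (min a.val r.val) (max a.val r.val) e ∨
        isH r (min b.val d.val) (max b.val d.val) e ∨
        isV d (min r.val c.val) (max r.val c.val) e := by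
  obtain ⟨w1, hnd1, hs1, he1⟩ := vwalk b a r
  obtain ⟨w2, hnd2, hs2, he2⟩ := hwalk r b d
  obtain ⟨w3, hnd3, hs3, he3⟩ := vwalk d r c
  refine ⟨w1.append (w2.append w3), ?_, ?_⟩
  · rw [Walk.isPath_def]
    have h2c : w2.support = (r, b) :: w2.support.tail := w2.support_eq_cons
    have h3c : w3.support = (r, d) :: w3.support.tail := w3.support_eq_cons
    have hsupp : (w1.append (w2.append w3)).support
        = w1.support ++ (w2.support.tail ++ w3.support.tail) := by
      rw [Walk.support_append, Walk.support_append]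
      conv_lhs => rw [h2c]
      simp
    rw [hsupp]
    have h2t : ∀ x ∈ w2.support.tail, x ≠ (r, b) ∧ x.1 = r := by
      intro x hx
      have hno : (r, b) ∉ w2.support.tail := by
        rw [h2c] at hnd2; exact (List.nodup_cons.mp hnd2).1
      exact ⟨fun h => hno (h ▸ hx), (hs2 x (List.mem_of_mem_tail hx)).1⟩
    have h3t : ∀ x ∈ w3.support.tail, x ≠ (r, d) ∧ x.2 = d ∧
        min r.val c.val ≤ x.1.val ∧ x.1.val ≤ max r.val c.val := by
      intro x hx
      have hno : (r, d) ∉ w3.support.tail := by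
        rw [h3c] at hnd3; exact (List.nodup_cons.mp hnd3).1
      obtain ⟨u1, u2, u3⟩ := hs3 x (List.mem_of_mem_tail hx)
      exact ⟨fun h => hno (h ▸ hx), u1, u2, u3⟩
    refine hnd1.append (List.Nodup.append ?_ ?_ ?_) ?_
    · rw [h2c] at hnd2; exact (List.nodup_cons.mp hnd2).2
    · rw [h3c] at hnd3; exact (List.nodup_cons.mp hnd3).2
    · intro x hx2 hx3
      exact (h3t x hx3).1 (Prod.ext (h2t x hx2).2 (h3t x hx3).2.1)
    · intro x hx1 hx23
      obtain ⟨v1, v2, v3⟩ := hs1 x hx1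
      rcases List.mem_append.mp hx23 with hx | hx
      · exact (h2t x hx).1 (Prod.ext (h2t x hx).2 v1)
      · rcases hp with hbd | rfl
        · exact hbd (v1 ▸ (h3t x hx).2.1)
        · have hx1r : x.1 = r := Fin.ext (by have := (h3t x hx).2.2; omega)
          exact (h3t x hx).1 (Prod.ext hx1r (h3t x hx).2.1)
  · intro e he
    rw [Walk.edges_append, Walk.edges_append] at he
    rcases List.mem_append.mp he with h | h
    · exact Or.inl (he1 e h)
    · rcases List.mem_append.mp h with h | h
      · exact Or.inr (Or.inl (he2 e h))
      · exact Or.inr (Or.inr (he3 e h))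

/-- A "horizontal-vertical-horizontal" path from `(a,b)` to `(c,d)` through column `m`. -/
lemma hvh (a c : Fin 3) (b d : Fin k) (m : Fin k) (hp : a ≠ c ∨ m = d) :
    ∃ w : (grid 3 k).Walk (a, b) (c, d), w.IsPath ∧
      ∀ e ∈ w.edges,
        isH a (min b.val m.val) (max b.val m.val) e ∨
        isV m (min a.val c.val) (max a.val c.val) e ∨
        isH c (min m.val d.val) (max m.val d.val) e := by
  obtain ⟨w1, hnd1, hs1, he1⟩ := hwalk a b m
  obtain ⟨w2, hnd2, hs2, he2⟩ := vwalk m a c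
  obtain ⟨w3, hnd3, hs3, he3⟩ := hwalk c m d
  refine ⟨w1.append (w2.append w3), ?_, ?_⟩
  · rw [Walk.isPath_def]
    have h2c : w2.support = (a, m) :: w2.support.tail := w2.support_eq_cons
    have h3c : w3.support = (c, m) :: w3.support.tail := w3.support_eq_cons
    have hsupp : (w1.append (w2.append w3)).support
        = w1.support ++ (w2.support.tail ++ w3.support.tail) := by
      rw [Walk.support_append, Walk.support_append]
      conv_lhs => rw [h2c]
      simp
    rw [hsupp]
    have h2t : ∀ x ∈ w2.support.tail, x ≠ (a, m) ∧ x.2 = m := by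
      intro x hx
      have hno : (a, m) ∉ w2.support.tail := by
        rw [h2c] at hnd2; exact (List.nodup_cons.mp hnd2).1
      exact ⟨fun h => hno (h ▸ hx), (hs2 x (List.mem_of_mem_tail hx)).1⟩
    have h3t : ∀ x ∈ w3.support.tail, x ≠ (c, m) ∧ x.1 = c ∧
        min m.val d.val ≤ x.2.val ∧ x.2.val ≤ max m.val d.val := by
      intro x hx
      have hno : (c, m) ∉ w3.support.tail := by
        rw [h3c] at hnd3; exact (List.nodup_cons.mp hnd3).1
      obtain ⟨u1, u2, u3⟩ := hs3 x (List.mem_of_mem_tail hx)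
      exact ⟨fun h => hno (h ▸ hx), u1, u2, u3⟩
    refine hnd1.append (List.Nodup.append ?_ ?_ ?_) ?_
    · rw [h2c] at hnd2; exact (List.nodup_cons.mp hnd2).2
    · rw [h3c] at hnd3; exact (List.nodup_cons.mp hnd3).2
    · intro x hx2 hx3
      exact (h3t x hx3).1 (Prod.ext (h3t x hx3).2.1 (h2t x hx2).2)
    · intro x hx1 hx23
      obtain ⟨v1, v2, v3⟩ := hs1 x hx1
      rcases List.mem_append.mp hx23 with hx | hx
      · exact (h2t x hx).1 (Prod.ext v1 (h2t x hx).2)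
      · rcases hp with hac | rfl
        · exact hac (v1 ▸ (h3t x hx).2.1)
        · have hx2m : x.2 = m := Fin.ext (by have := (h3t x hx).2.2; omega)
          exact (h3t x hx).1 (Prod.ext (h3t x hx).2.1 hx2m)
  · intro e he
    rw [Walk.edges_append, Walk.edges_append] at he
    rcases List.mem_append.mp he with h | h
    · exact Or.inl (he1 e h)
    · rcases List.mem_append.mp h with h | h
      · exact Or.inr (Or.inl (he2 e h))
      · exact Or.inr (Or.inr (he3 e h))

lemma fin3_cases (a : Fin 3) : a.val = 0 ∨ a.val = 1 ∨ a.val = 2 := by omega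

/-- Two VHV-routed paths are edge-disjoint under segment-disjointness conditions. -/
lemma RVV (a1 c1 a2 c2 : Fin 3) (b1 d1 b2 d2 : Fin k) (r1 r2 : ℕ)
    (hr1 : r1 < 3) (hr2 : r2 < 3)
    (hp : b1 ≠ d1 ∨ r1 = c1.val) (hq : b2 ≠ d2 ∨ r2 = c2.val)
    (h11 : b1.val ≠ b2.val ∨
      min (max a1.val r1) (max a2.val r2) ≤ max (min a1.val r1) (min a2.val r2))
    (h13 : b1.val ≠ d2.val ∨
      min (max a1.val r1) (max r2 c2.val) ≤ max (min a1.val r1) (min r2 c2.val))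
    (h31 : d1.val ≠ b2.val ∨
      min (max r1 c1.val) (max a2.val r2) ≤ max (min r1 c1.val) (min a2.val r2))
    (h33 : d1.val ≠ d2.val ∨
      min (max r1 c1.val) (max r2 c2.val) ≤ max (min r1 c1.val) (min r2 c2.val))
    (hHH : r1 ≠ r2 ∨
      min (max b1.val d1.val) (max b2.val d2.val) ≤ max (min b1.val d1.val) (min b2.val d2.val)) :
    ∃ (p : (grid 3 k).Walk (a1, b1) (c1, d1)) (q : (grid 3 k).Walk (a2, b2) (c2, d2)),
      p.IsPath ∧ q.IsPath ∧ p.edges.Disjoint q.edges := by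
  set R1 : Fin 3 := ⟨r1, hr1⟩ with hR1
  set R2 : Fin 3 := ⟨r2, hr2⟩ with hR2
  have hR1v : R1.val = r1 := rfl
  have hR2v : R2.val = r2 := rfl
  obtain ⟨p, hp1, hp2⟩ := vhv a1 c1 b1 d1 R1
    (hp.imp id (fun h => Fin.ext (by rw [hR1v, h])))
  obtain ⟨q, hq1, hq2⟩ := vhv a2 c2 b2 d2 R2
    (hq.imp id (fun h => Fin.ext (by rw [hR2v, h])))
  refine ⟨p, q, hp1, hq1, ?_⟩
  intro e he1 he2
  have A := hp2 e he1
  have B := hq2 e he2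
  clear he1 he2 hp1 hq1 hp2 hq2
  rcases A with h | h | h <;> rcases B with h' | h' | h'
  · exact isV_isV_false h h' h11
  · exact isH_isV_false h' h
  · exact isV_isV_false h h' h13
  · exact isH_isV_false h h'
  · exact isH_isH_false h h' hHH
  · exact isH_isV_false h h'
  · exact isV_isV_false h h' h31
  · exact isH_isV_false h' h
  · exact isV_isV_false h h' h33

/-- A VHV-routed path and an HVH-routed path are edge-disjoint under
segment-disjointness conditions. -/
lemma RVH (a1 c1 a2 c2 : Fin 3) (b1 d1 b2 d2 m : Fin k) (r1 : ℕ) (hr1 : r1 < 3)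
    (hp : b1 ≠ d1 ∨ r1 = c1.val) (hq : a2 ≠ c2 ∨ m = d2)
    (hH1 : r1 ≠ a2.val ∨
      min (max b1.val d1.val) (max b2.val m.val) ≤ max (min b1.val d1.val) (min b2.val m.val))
    (hH2 : r1 ≠ c2.val ∨
      min (max b1.val d1.val) (max m.val d2.val) ≤ max (min b1.val d1.val) (min m.val d2.val))
    (hV1 : b1.val ≠ m.val ∨
      min (max a1.val r1) (max a2.val c2.val) ≤ max (min a1.val r1) (min a2.val c2.val))
    (hV2 : d1.val ≠ m.val ∨
      min (max r1 c1.val) (max a2.val c2.val) ≤ max (min r1 c1.val) (min a2.val c2.val)) :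
    ∃ (p : (grid 3 k).Walk (a1, b1) (c1, d1)) (q : (grid 3 k).Walk (a2, b2) (c2, d2)),
      p.IsPath ∧ q.IsPath ∧ p.edges.Disjoint q.edges := by
  set R1 : Fin 3 := ⟨r1, hr1⟩ with hR1
  have hR1v : R1.val = r1 := rfl
  obtain ⟨p, hp1, hp2⟩ := vhv a1 c1 b1 d1 R1
    (hp.imp id (fun h => Fin.ext (by rw [hR1v, h])))
  obtain ⟨q, hq1, hq2⟩ := hvh a2 c2 b2 d2 m hq
  refine ⟨p, q, hp1, hq1, ?_⟩
  intro e he1 he2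
  have A := hp2 e he1
  have B := hq2 e he2
  clear he1 he2 hp1 hq1 hp2 hq2
  rcases A with h | h | h <;> rcases B with h' | h' | h'
  · exact isH_isV_false h' h
  · exact isV_isV_false h h' hV1
  · exact isH_isV_false h' h
  · exact isH_isH_false h h' hH1
  · exact isH_isV_false h h'
  · exact isH_isH_false h h' hH2
  · exact isH_isV_false h' h
  · exact isV_isV_false h h' hV2
  · exact isH_isV_false h' h

/-- The case where the first pair lies in one column and the second does not. -/
lemma caseB (a1 c1 a2 c2 : Fin 3) (b1 d1 b2 d2 : Fin k)
    (h1 : b1 = d1) (h2 : b2 ≠ d2) :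
    ∃ (p : (grid 3 k).Walk (a1, b1) (c1, d1)) (q : (grid 3 k).Walk (a2, b2) (c2, d2)),
      p.IsPath ∧ q.IsPath ∧ p.edges.Disjoint q.edges := by
  have h1' : b1.val = d1.val := by rw [h1]
  have h2' : b2.val ≠ d2.val := fun h => h2 (Fin.ext h)
  by_cases hc : b2.val = b1.val
  · -- q bends at (a2, d2); its vertical is in column d2 ≠ b1
    exact RVH a1 c1 a2 c2 b1 d1 b2 d2 d2 c1.val c1.isLt (Or.inr rfl) (Or.inr rfl)
      (by omega) (by omega) (by omega) (by omega)
  · -- q bends at (c2, b2); its vertical is in column b2 ≠ b1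
    exact RVV a1 c1 a2 c2 b1 d1 b2 d2 c1.val c2.val c1.isLt c2.isLt
      (Or.inr rfl) (Or.inr rfl) (by omega) (by omega) (by omega) (by omega) (by omega)

set_option maxHeartbeats 4000000 in
theorem grid3k_weakly2Linked' (k : ℕ) (hk : 3 ≤ k) : Weakly2Linked (grid 3 k) := by
  rintro ⟨a1, b1⟩ ⟨c1, d1⟩ ⟨a2, b2⟩ ⟨c2, d2⟩
  by_cases hb1 : b1 = d1
  · by_cases hb2 : b2 = d2
    · -- Case A: both pairs vertical
      have h1' : b1.val = d1.val := by rw [hb1]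
      have h2' : b2.val = d2.val := by rw [hb2]
      by_cases hcol : b1.val = b2.val
      · by_cases hov : min (max a1.val c1.val) (max a2.val c2.val) ≤
            max (min a1.val c1.val) (min a2.val c2.val)
        · exact RVV a1 c1 a2 c2 b1 d1 b2 d2 c1.val c2.val c1.isLt c2.isLt
            (Or.inr rfl) (Or.inr rfl) (by omega) (by omega) (by omega) (by omega) (by omega)
        · -- detour for q through a column different from b1
          obtain ⟨m, hm⟩ : ∃ m : Fin k, m.val ≠ b1.val := by
            by_cases h0 : b1.val = 0
            · exact ⟨⟨1, by omega⟩, by dsimp only; omega⟩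
            · exact ⟨⟨0, by omega⟩, by dsimp only; omega⟩
          refine RVH a1 c1 a2 c2 b1 d1 b2 d2 m c1.val c1.isLt (Or.inr rfl)
            (Or.inl (fun h => ?_)) (by omega) (by omega) (by omega) (by omega)
          · apply_fun Fin.val at h; omega
      · exact RVV a1 c1 a2 c2 b1 d1 b2 d2 c1.val c2.val c1.isLt c2.isLt
          (Or.inr rfl) (Or.inr rfl) (by omega) (by omega) (by omega) (by omega) (by omega)
    · exact caseB a1 c1 a2 c2 b1 d1 b2 d2 hb1 hb2
  · by_cases hb2 : b2 = d2
    · obtain ⟨q, p, hq, hp, hd⟩ := caseB a2 c2 a1 c1 b2 d2 b1 d1 hb2 hb1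
      exact ⟨p, q, hp, hq, fun e he1 he2 => hd he2 he1⟩
    · -- Case C: both pairs span at least two columns
      have hb1' : b1.val ≠ d1.val := fun h => hb1 (Fin.ext h)
      have hb2' : b2.val ≠ d2.val := fun h => hb2 (Fin.ext h)
      have ha1 := a1.isLt
      have hc1 := c1.isLt
      have ha2 := a2.isLt
      have hc2 := c2.isLt
      by_cases hL1 : c1.val ≠ a2.val ∧ (b1.val ≠ d2.val ∨
          (a1.val = c1.val ∨ a2.val = c2.val ∨
            (a1.val ≤ a2.val ∧ a1.val ≤ c2.val ∧ c1.val ≤ a2.val ∧ c1.val ≤ c2.val) ∨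
            (a2.val ≤ a1.val ∧ a2.val ≤ c1.val ∧ c2.val ≤ a1.val ∧ c2.val ≤ c1.val)))
      · exact RVV a1 c1 a2 c2 b1 d1 b2 d2 c1.val a2.val c1.isLt a2.isLt
          (Or.inl hb1) (Or.inl hb2) (by omega) (by omega) (by omega) (by omega) (by omega)
      · by_cases hL2 : a1.val ≠ c2.val ∧ (d1.val ≠ b2.val ∨
            (a1.val = c1.val ∨ a2.val = c2.val ∨
            (a1.val ≤ a2.val ∧ a1.val ≤ c2.val ∧ c1.val ≤ a2.val ∧ c1.val ≤ c2.val) ∨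
            (a2.val ≤ a1.val ∧ a2.val ≤ c1.val ∧ c2.val ≤ a1.val ∧ c2.val ≤ c1.val)))
        · exact RVV a1 c1 a2 c2 b1 d1 b2 d2 a1.val c2.val a1.isLt c2.isLt
            (Or.inl hb1) (Or.inl hb2) (by omega) (by omega) (by omega) (by omega) (by omega)
        · by_cases hL3 : c1.val ≠ c2.val ∧ (b1.val ≠ b2.val ∨
              (a1.val = c1.val ∨ a2.val = c2.val ∨
            (a1.val ≤ a2.val ∧ a1.val ≤ c2.val ∧ c1.val ≤ a2.val ∧ c1.val ≤ c2.val) ∨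
            (a2.val ≤ a1.val ∧ a2.val ≤ c1.val ∧ c2.val ≤ a1.val ∧ c2.val ≤ c1.val)))
          · exact RVV a1 c1 a2 c2 b1 d1 b2 d2 c1.val c2.val c1.isLt c2.isLt
              (Or.inl hb1) (Or.inl hb2) (by omega) (by omega) (by omega) (by omega) (by omega)
          · by_cases hL4 : a1.val ≠ a2.val ∧ (d1.val ≠ d2.val ∨
                (a1.val = c1.val ∨ a2.val = c2.val ∨
            (a1.val ≤ a2.val ∧ a1.val ≤ c2.val ∧ c1.val ≤ a2.val ∧ c1.val ≤ c2.val) ∨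
            (a2.val ≤ a1.val ∧ a2.val ≤ c1.val ∧ c2.val ≤ a1.val ∧ c2.val ≤ c1.val)))
            · exact RVV a1 c1 a2 c2 b1 d1 b2 d2 a1.val a2.val a1.isLt a2.isLt
                (Or.inl hb1) (Or.inl hb2) (by omega) (by omega) (by omega) (by omega) (by omega)
            · by_cases hdeg1 : a1.val = c1.val
              · by_cases ha10 : a1.val = 0
                · exact RVV a1 c1 a2 c2 b1 d1 b2 d2 c1.val 1 c1.isLt (by omega)
                    (Or.inl hb1) (Or.inl hb2) (by omega) (by omega) (by omega) (by omega) (by omega)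
                · exact RVV a1 c1 a2 c2 b1 d1 b2 d2 c1.val 0 c1.isLt (by omega)
                    (Or.inl hb1) (Or.inl hb2) (by omega) (by omega) (by omega) (by omega) (by omega)
              · by_cases hdeg2 : a2.val = c2.val
                · by_cases ha20 : a2.val = 0
                  · exact RVV a1 c1 a2 c2 b1 d1 b2 d2 1 c2.val (by omega) c2.isLt
                      (Or.inl hb1) (Or.inl hb2) (by omega) (by omega) (by omega) (by omega) (by omega)
                  · exact RVV a1 c1 a2 c2 b1 d1 b2 d2 0 c2.val (by omega) c2.isLt
                      (Or.inl hb1) (Or.inl hb2) (by omega) (by omega) (by omega) (by omega) (by omega)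
                · -- leftover: crossing or parallel configurations
                  obtain ⟨m, hm1, hm2⟩ : ∃ m : Fin k, m.val ≠ b1.val ∧ m.val ≠ d1.val := by
                    by_cases e0 : b1.val ≠ 0 ∧ d1.val ≠ 0
                    · exact ⟨⟨0, by omega⟩, by dsimp only; omega⟩
                    · by_cases e1 : b1.val ≠ 1 ∧ d1.val ≠ 1
                      · exact ⟨⟨1, by omega⟩, by dsimp only; omega⟩
                      · exact ⟨⟨2, by omega⟩, by dsimp only; omega⟩
                  have hne : a2 ≠ c2 := fun h => hdeg2 (by rw [h])
                  have K1 : c1.val = a2.val ∨ b1.val = d2.val := by omega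
                  have K2 : a1.val = c2.val ∨ d1.val = b2.val := by omega
                  have K3 : c1.val = c2.val ∨ b1.val = b2.val := by omega
                  have K4 : a1.val = a2.val ∨ d1.val = d2.val := by omega
                  clear hL1 hL2 hL3 hL4
                  rcases fin3_cases a1 with h1 | h1 | h1 <;>
                    rcases fin3_cases c1 with h2 | h2 | h2 <;>
                      rcases fin3_cases a2 with h3 | h3 | h3 <;>
                        rcases fin3_cases c2 with h4 | h4 | h4 <;>
                          first
                          | (exfalso; omega)
                          | exact RVH a1 c1 a2 c2 b1 d1 b2 d2 m 1 (by omega) (Or.inl hb1)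
                              (Or.inl hne) (by omega) (by omega) (by omega) (by omega)
                          | exact RVV a1 c1 a2 c2 b1 d1 b2 d2 2 1 (by omega) (by omega)
                              (Or.inl hb1) (Or.inl hb2)
                              (by omega) (by omega) (by omega) (by omega) (by omega)
                          | exact RVV a1 c1 a2 c2 b1 d1 b2 d2 0 1 (by omega) (by omega)
                              (Or.inl hb1) (Or.inl hb2)
                              (by omega) (by omega) (by omega) (by omega) (by omega)

end Grid3k

/-- For every `k ≥ 3`, the grid `P3 □ Pk` is weakly 2-linked. -/
theorem grid3k_weakly2Linked (k : ℕ) (hk : 3 ≤ k) : Weakly2Linked (grid 3 k) :=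
  Grid3k.grid3k_weakly2Linked' k hk
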